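/- Let k ≥ 1 and let s : Fin k → ℕ with s i ≥ 1 for all i. Let M̃ be a nonnegative real square matrix indexed by the sigma type Σ i, Fin (s i), partitioned into k² blocks where block (i,j) consists of the entries M̃ ((i,u),(j,v)) for u ∈ Fin (s i), v ∈ Fin (s j) (so the diagonal blocks are square). Suppose there is a k×k matrix m such that for every i, j and every row u ∈ Fin (s i), the row sum of block (i,j) at row u equals m i j, i.e. Σ_{v} M̃ ((i,u),(j,v)) = m i j. Then the spectral radius of M̃ equals the spectral radius of m. -/

import Mathlib

open Matrix
open scoped ENNReal NNReal

/-- Spectral radius of a real square matrix: the maximum of the moduli of its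
complex eigenvalues (elements of the spectrum of the matrix over `ℂ`). -/
noncomputable def specRad {n : Type*} [Fintype n] [DecidableEq n]
    (M : Matrix n n ℝ) : ℝ :=
  sSup ((fun z : ℂ => ‖z‖) '' spectrum ℂ (M.map (algebraMap ℝ ℂ)))

section Aux

attribute [local instance]
  Matrix.linftyOpSeminormedAddCommGroup
  Matrix.linftyOpNormedAddCommGroup
  Matrix.linftyOpSemiNormedRing
  Matrix.linftyOpNormedRing
  Matrix.linftyOpNormedAlgebra

/-- `specRad` is the real-valued version of mathlib's `spectralRadius` (for the
complexified matrix), computed with the `L∞` operator norm instances. -/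
lemma specRad_eq_toReal {n : Type*} [Fintype n] [DecidableEq n] [Nonempty n]
    (A : Matrix n n ℝ) :
    specRad A = (spectralRadius ℂ (A.map (algebraMap ℝ ℂ))).toReal := by
  set B := A.map (algebraMap ℝ ℂ) with hB
  have hne : (spectrum ℂ B).Nonempty := spectrum.nonempty B
  obtain ⟨μ, hμ, hμr⟩ := spectrum.exists_nnnorm_eq_spectralRadius_of_nonempty hne
  have hmax : ∀ z ∈ spectrum ℂ B, ‖z‖ ≤ ‖μ‖ := by
    intro z hz
    have h1 : (‖z‖₊ : ℝ≥0∞) ≤ spectralRadius ℂ B :=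
      le_iSup₂ (f := fun k (_ : k ∈ spectrum ℂ B) => (‖k‖₊ : ℝ≥0∞)) z hz
    rw [← hμr] at h1
    have h2 : ‖z‖₊ ≤ ‖μ‖₊ := by exact_mod_cast h1
    simpa [← coe_nnnorm] using NNReal.coe_le_coe.mpr h2
  have hgreat : IsGreatest ((fun z : ℂ => ‖z‖) '' spectrum ℂ B) ‖μ‖ :=
    ⟨⟨μ, hμ, rfl⟩, by rintro x ⟨z, hz, rfl⟩; exact hmax z hz⟩
  rw [specRad, hgreat.csSup_eq, ← hμr]
  simp [← coe_nnnorm]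

lemma linfty_nnnorm_map_algebraMap {ι : Type*} [Fintype ι] (A : Matrix ι ι ℝ) :
    ‖A.map (algebraMap ℝ ℂ)‖₊ = ‖A‖₊ := by
  rw [Matrix.linfty_opNNNorm_def, Matrix.linfty_opNNNorm_def]
  refine Finset.sup_congr rfl fun i _ => Finset.sum_congr rfl fun j _ => ?_
  simp [Matrix.map_apply, Complex.coe_algebraMap]

/-- If the `L∞` operator norms of all powers of two real matrices agree, so do
their spectral radii, by Gelfand's formula applied to the complexifications. -/
lemma specRad_eq_of_nnnorm_pow_eq {ι₁ ι₂ : Type*}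
    [Fintype ι₁] [DecidableEq ι₁] [Nonempty ι₁]
    [Fintype ι₂] [DecidableEq ι₂] [Nonempty ι₂]
    (A : Matrix ι₁ ι₁ ℝ) (B : Matrix ι₂ ι₂ ℝ)
    (h : ∀ n : ℕ, ‖A ^ n‖₊ = ‖B ^ n‖₊) :
    specRad A = specRad B := by
  set A' := A.map (algebraMap ℝ ℂ) with hA'
  set B' := B.map (algebraMap ℝ ℂ) with hB'
  have hpowA : ∀ n : ℕ, A' ^ n = (A ^ n).map (algebraMap ℝ ℂ) := by
    intro n
    simpa [hA', RingHom.mapMatrix_apply] using (map_pow ((algebraMap ℝ ℂ).mapMatrix) A n).symm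
  have hpowB : ∀ n : ℕ, B' ^ n = (B ^ n).map (algebraMap ℝ ℂ) := by
    intro n
    simpa [hB', RingHom.mapMatrix_apply] using (map_pow ((algebraMap ℝ ℂ).mapMatrix) B n).symm
  have hnorm' : ∀ n : ℕ, ‖A' ^ n‖₊ = ‖B' ^ n‖₊ := by
    intro n
    rw [hpowA, hpowB, linfty_nnnorm_map_algebraMap, linfty_nnnorm_map_algebraMap, h n]
  have hsr : spectralRadius ℂ A' = spectralRadius ℂ B' := by
    have t1 := spectrum.pow_nnnorm_pow_one_div_tendsto_nhds_spectralRadius A'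
    have t2 := spectrum.pow_nnnorm_pow_one_div_tendsto_nhds_spectralRadius B'
    have he : (fun n : ℕ => (‖A' ^ n‖₊ : ℝ≥0∞) ^ (1 / n : ℝ))
        = fun n : ℕ => (‖B' ^ n‖₊ : ℝ≥0∞) ^ (1 / n : ℝ) := by
      funext n; rw [hnorm' n]
    rw [he] at t1
    exact tendsto_nhds_unique t1 t2
  rw [specRad_eq_toReal A, specRad_eq_toReal B, ← hA', ← hB', hsr]

/-- If a nonnegative block matrix (with square diagonal blocks) has constant row
sums `m i j` in each block `(i,j)`, then its spectral radius equals the spectral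
radius of the matrix `m` of block row sums. -/
theorem blockConstRowSums_specRad_eq
    {k : ℕ} (hk : 1 ≤ k) (s : Fin k → ℕ) (hs : ∀ i, 1 ≤ s i)
    (M : Matrix (Σ i, Fin (s i)) (Σ i, Fin (s i)) ℝ)
    (hM : ∀ p q, 0 ≤ M p q)
    (m : Matrix (Fin k) (Fin k) ℝ)
    (hrow : ∀ (i j : Fin k) (u : Fin (s i)),
      ∑ v : Fin (s j), M ⟨i, u⟩ ⟨j, v⟩ = m i j) :
    specRad M = specRad m := by
  haveI : NeZero k := ⟨by omega⟩
  haveI : ∀ i : Fin k, Nonempty (Fin (s i)) := fun i =>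
    ⟨⟨0, by have := hs i; omega⟩⟩
  haveI : Nonempty (Σ i, Fin (s i)) := ⟨⟨⟨0, by omega⟩, Classical.arbitrary _⟩⟩
  -- nonnegativity of powers
  have hpow_nonneg : ∀ (n : ℕ) p q, 0 ≤ (M ^ n) p q := by
    intro n
    induction n with
    | zero => intro p q; by_cases h : p = q <;> simp [Matrix.one_apply, h]
    | succ n ih =>
      intro p q
      rw [pow_succ, Matrix.mul_apply]
      exact Finset.sum_nonneg fun r _ => mul_nonneg (ih p r) (hM r q)
  -- constant block row sums of powers
  have hrow_pow : ∀ (n : ℕ) (i j : Fin k) (u : Fin (s i)),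
      ∑ v : Fin (s j), (M ^ n) ⟨i, u⟩ ⟨j, v⟩ = (m ^ n) i j := by
    intro n
    induction n with
    | zero =>
      intro i j u
      by_cases h : i = j
      · subst h
        simp [Matrix.one_apply, Sigma.ext_iff]
      · simp [Matrix.one_apply, Sigma.ext_iff, h]
    | succ n ih =>
      intro i j u
      simp_rw [pow_succ', Matrix.mul_apply]
      rw [Finset.sum_comm, ← Finset.univ_sigma_univ, Finset.sum_sigma]
      refine Finset.sum_congr rfl fun l _ => ?_
      simp_rw [← Finset.mul_sum]
      have hw : ∀ w : Fin (s l), M ⟨i, u⟩ ⟨l, w⟩ * (∑ v : Fin (s j), (M ^ n) ⟨l, w⟩ ⟨j, v⟩)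
          = M ⟨i, u⟩ ⟨l, w⟩ * (m ^ n) l j := fun w => by rw [ih l j w]
      rw [Finset.sum_congr rfl fun w _ => hw w, ← Finset.sum_mul, hrow i l u]
  -- the L∞ operator nnnorms of the powers agree
  have hnorm : ∀ n : ℕ, ‖M ^ n‖₊ = ‖m ^ n‖₊ := by
    intro n
    rw [Matrix.linfty_opNNNorm_def, Matrix.linfty_opNNNorm_def]
    have hval : ∀ (i : Fin k) (u : Fin (s i)),
        (∑ q, ‖(M ^ n) ⟨i, u⟩ q‖₊) = ∑ j, ‖(m ^ n) i j‖₊ := by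
      intro i u
      rw [← Finset.univ_sigma_univ, Finset.sum_sigma]
      refine Finset.sum_congr rfl fun j _ => ?_
      have hm : (m ^ n) i j = ∑ v : Fin (s j), (M ^ n) ⟨i, u⟩ ⟨j, v⟩ :=
        (hrow_pow n i j u).symm
      refine NNReal.coe_injective ?_
      push_cast [coe_nnnorm]
      rw [hm, Real.norm_of_nonneg (Finset.sum_nonneg fun v _ => hpow_nonneg n _ _)]
      exact Finset.sum_congr rfl fun v _ => Real.norm_of_nonneg (hpow_nonneg n _ _)
    apply le_antisymm
    · refine Finset.sup_le fun p _ => ?_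
      obtain ⟨i, u⟩ := p
      rw [hval i u]
      exact Finset.le_sup (f := fun i => ∑ j, ‖(m ^ n) i j‖₊) (Finset.mem_univ i)
    · refine Finset.sup_le fun i _ => ?_
      obtain ⟨u⟩ := (inferInstance : Nonempty (Fin (s i)))
      rw [← hval i u]
      exact Finset.le_sup (f := fun p => ∑ q, ‖(M ^ n) p q‖₊) (Finset.mem_univ (⟨i, u⟩ : Σ i, Fin (s i)))
  exact specRad_eq_of_nnnorm_pow_eq M m hnorm

end Aux
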